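/- Gaussian centroid shift theorem: Let f(x) = (1/√(2πσ²))·exp(−(x−μ)²/(2σ²)) with μ ∈ ℝ, σ > 0, let g(x) = f(x−h) with h > 0, and let S = ℝ \ (ℓ, u) with ℓ < u. Define the centroid ⟨φ⟩_S = (∫_S x φ(x) dx)/(∫_S φ(x) dx). Then ⟨g⟩_S > ⟨f⟩_S. -/
import Mathlib


open Real MeasureTheory Set

theorem stmt16 (μ σ h ℓ u : ℝ) (hσ : 0 < σ) (hh : 0 < h) (hlu : ℓ < u)
    (f g : ℝ → ℝ)
    (hf : ∀ x, f x = (Real.sqrt (2 * Real.pi * σ ^ 2))⁻¹ *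
      Real.exp (-(x - μ) ^ 2 / (2 * σ ^ 2)))
    (hg : ∀ x, g x = f (x - h)) :
    (∫ x in Set.univ \ Set.Ioo ℓ u, x * g x) / (∫ x in Set.univ \ Set.Ioo ℓ u, g x) >
      (∫ x in Set.univ \ Set.Ioo ℓ u, x * f x) / (∫ x in Set.univ \ Set.Ioo ℓ u, f x) := by
  set S : Set ℝ := Set.univ \ Set.Ioo ℓ u with hSdef
  set b : ℝ := (2 * σ ^ 2)⁻¹ with hbdef
  have hb : 0 < b := by positivity
  set c : ℝ := (Real.sqrt (2 * Real.pi * σ ^ 2))⁻¹ with hcdef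
  have hc : 0 < c := by
    have h1 : 0 < Real.sqrt (2 * Real.pi * σ ^ 2) :=
      Real.sqrt_pos.mpr (by positivity)
    positivity
  have hfe : ∀ x, f x = c * Real.exp (-b * (x - μ) ^ 2) := by
    intro x; rw [hf]
    congr 1
    congr 1
    rw [hbdef]; ring
  have hge : ∀ x, g x = c * Real.exp (-b * (x - (μ + h)) ^ 2) := by
    intro x; rw [hg, hfe]
    congr 2
    ring
  have hfpos : ∀ x, 0 < f x := fun x => by rw [hfe]; positivity
  have hgpos : ∀ x, 0 < g x := fun x => by rw [hge]; positivity
  have Ie : ∀ m : ℝ, Integrable (fun x : ℝ => Real.exp (-b * (x - m) ^ 2)) :=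
    fun m => (integrable_exp_neg_mul_sq hb).comp_sub_right m
  have Ixe : ∀ m : ℝ, Integrable (fun x : ℝ => (x - m) * Real.exp (-b * (x - m) ^ 2)) :=
    fun m => (integrable_mul_exp_neg_mul_sq hb).comp_sub_right m
  have Hf : Integrable f := by
    refine ((Ie μ).const_mul c).congr (Filter.Eventually.of_forall fun x => ?_)
    rw [hfe]
  have Hg : Integrable g := by
    refine ((Ie (μ + h)).const_mul c).congr (Filter.Eventually.of_forall fun x => ?_)
    rw [hge]
  have Hxf : Integrable (fun x => x * f x) := by
    refine (((Ixe μ).const_mul c).add ((Ie μ).const_mul (c * μ))).congr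
      (Filter.Eventually.of_forall fun x => ?_)
    simp only [Pi.add_apply, hfe]; ring
  have Hxg : Integrable (fun x => x * g x) := by
    refine (((Ixe (μ + h)).const_mul c).add ((Ie (μ + h)).const_mul (c * (μ + h)))).congr
      (Filter.Eventually.of_forall fun x => ?_)
    simp only [Pi.add_apply, hge]; ring
  have hSIci : Ici u ⊆ S := by
    intro x hx
    exact ⟨trivial, fun hxo => absurd hx (not_le.mpr hxo.2)⟩
  have hvolS : 0 < volume S := by
    have h1 : volume (Ici u) ≤ volume S := measure_mono hSIci
    rw [Real.volume_Ici] at h1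
    exact lt_of_lt_of_le ENNReal.zero_lt_top h1
  set A : ℝ := ∫ x in S, f x with hAdef
  set B : ℝ := ∫ x in S, g x with hBdef
  have hA : 0 < A := by
    rw [hAdef]
    refine (setIntegral_pos_iff_support_of_nonneg_ae
      (Filter.Eventually.of_forall fun x => (hfpos x).le) Hf.integrableOn).mpr ?_
    have hsupp : Function.support f = Set.univ :=
      Set.eq_univ_of_forall fun x => (hfpos x).ne'
    rw [hsupp, Set.univ_inter]
    exact hvolS
  have hB : 0 < B := by
    rw [hBdef]
    refine (setIntegral_pos_iff_support_of_nonneg_ae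
      (Filter.Eventually.of_forall fun x => (hgpos x).le) Hg.integrableOn).mpr ?_
    have hsupp : Function.support g = Set.univ :=
      Set.eq_univ_of_forall fun x => (hgpos x).ne'
    rw [hsupp, Set.univ_inter]
    exact hvolS
  set x₀ : ℝ := μ + h / 2 + σ ^ 2 * Real.log (B / A) / h with hx₀def
  have hgf : ∀ x, g x = f x * Real.exp (b * h * (2 * (x - μ) - h)) := by
    intro x
    rw [hge, hfe, mul_assoc, ← Real.exp_add]
    congr 1
    ring
  have hL0 : b * h * (2 * (x₀ - μ) - h) = Real.log (B / A) := by
    rw [hx₀def, hbdef]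
    field_simp
    ring
  have hAB : A * Real.exp (b * h * (2 * (x₀ - μ) - h)) = B := by
    rw [hL0, Real.exp_log (div_pos hB hA)]
    field_simp
  have hdiff : ∀ x, A * g x - B * f x
      = A * f x * (Real.exp (b * h * (2 * (x - μ) - h))
        - Real.exp (b * h * (2 * (x₀ - μ) - h))) := by
    intro x
    rw [hgf x, ← hAB]
    ring
  have hbh : 0 < b * h := mul_pos hb hh
  have hstrict : ∀ x, x ≠ x₀ → 0 < (x - x₀) * (A * g x - B * f x) := by
    intro x hx
    rw [hdiff]
    rcases hx.lt_or_gt with hlt | hlt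
    · have he : Real.exp (b * h * (2 * (x - μ) - h))
          < Real.exp (b * h * (2 * (x₀ - μ) - h)) :=
        Real.exp_lt_exp.mpr (by nlinarith)
      have h2 : A * f x * (Real.exp (b * h * (2 * (x - μ) - h))
          - Real.exp (b * h * (2 * (x₀ - μ) - h))) < 0 :=
        mul_neg_of_pos_of_neg (mul_pos hA (hfpos x)) (sub_neg.mpr he)
      exact mul_pos_of_neg_of_neg (sub_neg.mpr hlt) h2
    · have he : Real.exp (b * h * (2 * (x₀ - μ) - h))
          < Real.exp (b * h * (2 * (x - μ) - h)) :=
        Real.exp_lt_exp.mpr (by nlinarith)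
      have h2 : 0 < A * f x * (Real.exp (b * h * (2 * (x - μ) - h))
          - Real.exp (b * h * (2 * (x₀ - μ) - h))) :=
        mul_pos (mul_pos hA (hfpos x)) (sub_pos.mpr he)
      exact mul_pos (sub_pos.mpr hlt) h2
  have hnonneg : ∀ x, 0 ≤ (x - x₀) * (A * g x - B * f x) := by
    intro x
    rcases eq_or_ne x x₀ with rfl | hx
    · simp
    · exact (hstrict x hx).le
  have Hw : Integrable (fun x => (x - x₀) * (A * g x - B * f x)) := by
    refine (((Hxg.const_mul A).sub (Hxf.const_mul B)).sub
      ((Hg.const_mul (x₀ * A)).sub (Hf.const_mul (x₀ * B)))).congr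
      (Filter.Eventually.of_forall fun x => ?_)
    simp only [Pi.sub_apply]; ring
  have hDpos : 0 < ∫ x in S, (x - x₀) * (A * g x - B * f x) := by
    refine (setIntegral_pos_iff_support_of_nonneg_ae
      (Filter.Eventually.of_forall fun x => hnonneg x) Hw.integrableOn).mpr ?_
    have hsub : Ici u \ {x₀} ⊆
        Function.support (fun x => (x - x₀) * (A * g x - B * f x)) ∩ S := by
      rintro x ⟨hx1, hx2⟩
      exact ⟨(hstrict x hx2).ne', hSIci hx1⟩
    refine lt_of_lt_of_le ?_ (measure_mono hsub)
    rw [measure_diff_null Real.volume_singleton, Real.volume_Ici]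
    exact ENNReal.zero_lt_top
  have hint0 : ∫ x in S, (A * g x - B * f x) = 0 := by
    rw [integral_sub (Hg.const_mul A).integrableOn (Hf.const_mul B).integrableOn,
      integral_const_mul, integral_const_mul, ← hAdef, ← hBdef]
    ring
  have hexpand : ∫ x in S, (x - x₀) * (A * g x - B * f x)
      = (A * ∫ x in S, x * g x) - (B * ∫ x in S, x * f x)
        - x₀ * ∫ x in S, (A * g x - B * f x) := by
    have heq : ∀ x, (x - x₀) * (A * g x - B * f x)
        = (A * (x * g x) - B * (x * f x)) - x₀ * (A * g x - B * f x) := by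
      intro x; ring
    have I1 : IntegrableOn (fun x => A * (x * g x) - B * (x * f x)) S :=
      ((Hxg.const_mul A).sub (Hxf.const_mul B)).integrableOn
    have I2 : IntegrableOn (fun x => x₀ * (A * g x - B * f x)) S :=
      (((Hg.const_mul A).sub (Hf.const_mul B)).const_mul x₀).integrableOn
    simp_rw [heq]
    rw [integral_sub I1 I2,
      integral_sub (Hxg.const_mul A).integrableOn (Hxf.const_mul B).integrableOn,
      integral_const_mul, integral_const_mul, integral_const_mul,
      integral_sub (Hg.const_mul A).integrableOn (Hf.const_mul B).integrableOn,
      integral_const_mul, integral_const_mul, ← hAdef, ← hBdef]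
  rw [hexpand, hint0, mul_zero, sub_zero] at hDpos
  rw [gt_iff_lt, div_lt_div_iff₀ hA hB]
  nlinarith [hDpos]
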